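/- For every integer n ≥ 1, the endomorphism algebra of the n-th tensor power of the standard representation of the dicyclic group of degree n satisfies dim_ℂ End_{Dic_n}(V^{⊗n}) = (1/2)·binomial(2n,n) + 1. -/

import Mathlib

open scoped TensorProduct
open Matrix

noncomputable section

/-- `ℂ²`, the standard two-dimensional complex vector space. -/
abbrev V2 : Type := Fin 2 → ℂ

/-- The standard representation of a subgroup `G ≤ GL₂(ℂ)` on `ℂ²`, by matrix-vector
multiplication. -/
def stdRep (G : Subgroup (GL (Fin 2) ℂ)) : Representation ℂ G V2 where
  toFun g := Matrix.toLin' ((g : GL (Fin 2) ℂ) : Matrix (Fin 2) (Fin 2) ℂ)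
  map_one' := by
    simp only [OneMemClass.coe_one, Units.val_one, Matrix.toLin'_one]
    rfl
  map_mul' g h := by
    simp only [MulMemClass.coe_mul, Units.val_mul, Matrix.toLin'_mul]
    rfl

/-- `TPow j` is the `(j+1)`-st tensor power `V^{⊗(j+1)}` of `V = ℂ²`, realized as an
iterated binary tensor product (bundled as an object of `ModuleCat ℂ` so that the
recursion carries its module structure). -/
def TPow : ℕ → ModuleCat ℂ
  | 0 => ModuleCat.of ℂ V2
  | (j + 1) => ModuleCat.of ℂ (TPow j ⊗[ℂ] V2)

/-- The diagonal representation of `G ≤ GL₂(ℂ)` on `TPow j = V^{⊗(j+1)}`. -/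
def TPowRep (G : Subgroup (GL (Fin 2) ℂ)) : (j : ℕ) → Representation ℂ G (TPow j)
  | 0 => stdRep G
  | (j + 1) => (TPowRep G j).tprod (stdRep G)

/-- The basis vector `v_s^{⊗(j+1)}` of `TPow j = V^{⊗(j+1)}`, for `s : Fin 2`. -/
def vpow (s : Fin 2) : (j : ℕ) → TPow j
  | 0 => Pi.single s 1
  | (j + 1) => vpow s j ⊗ₜ[ℂ] Pi.single s 1

/-- The subspace `V_{j+1}` of `V^{⊗(j+1)}` spanned by `v₁^{⊗(j+1)}` and `v₂^{⊗(j+1)}`. -/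
def Vsub (j : ℕ) : Submodule ℂ (TPow j) := Submodule.span ℂ {vpow 0 j, vpow 1 j}

/-- The space `End_G(W)` of `G`-equivariant linear endomorphisms of a representation `W`. -/
def equivEnd {G W : Type*} [Group G] [AddCommGroup W] [Module ℂ W]
    (ρ : Representation ℂ G W) : Submodule ℂ (W →ₗ[ℂ] W) where
  carrier := {f | ∀ g : G, f ∘ₗ ρ g = ρ g ∘ₗ f}
  add_mem' := by
    intro f h hf hh g
    simp only [LinearMap.add_comp, LinearMap.comp_add, hf g, hh g]
  zero_mem' := by
    intro g
    simp only [LinearMap.zero_comp, LinearMap.comp_zero]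
  smul_mem' := by
    intro c f hf g
    simp only [LinearMap.smul_comp, LinearMap.comp_smul, hf g]

def Idx : ℕ → Type
  | 0 => Fin 2
  | (j + 1) => Idx j × Fin 2

instance : ∀ j, Fintype (Idx j)
  | 0 => inferInstanceAs (Fintype (Fin 2))
  | (j + 1) => letI := instFintypeIdx j; inferInstanceAs (Fintype (Idx j × Fin 2))

instance : ∀ j, DecidableEq (Idx j)
  | 0 => inferInstanceAs (DecidableEq (Fin 2))
  | (j + 1) => letI := instDecidableEqIdx j; inferInstanceAs (DecidableEq (Idx j × Fin 2))

def wt : ∀ j, Idx j → ℕ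
  | 0, s => (show Fin 2 from s).val
  | (j + 1), s => wt j s.1 + s.2.val

def flp : ∀ j, Idx j → Idx j
  | 0, s => (show Fin 2 from s) + 1
  | (j + 1), s => (flp j s.1, s.2 + 1)

lemma Idx.zero_cases (s : Idx 0) : s = (0 : Fin 2) ∨ s = (1 : Fin 2) := by
  have : ∀ t : Fin 2, t = 0 ∨ t = 1 := by decide
  exact this s

lemma wt_le : ∀ j (s : Idx j), wt j s ≤ j + 1
  | 0, s => by rcases Idx.zero_cases s with rfl | rfl <;> decide
  | (j + 1), s => by
      have := wt_le j s.1
      have := s.2.isLt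
      simp only [wt]; omega

lemma wt_flp : ∀ j (s : Idx j), wt j (flp j s) = (j + 1) - wt j s
  | 0, s => by rcases Idx.zero_cases s with rfl | rfl <;> decide
  | (j + 1), s => by
      have h1 := wt_flp j s.1
      have h2 := wt_le j s.1
      have h3 := s.2.isLt
      simp only [wt, flp, h1]
      rcases (by omega : s.2.val = 0 ∨ s.2.val = 1) with h | h
      · have h0 : s.2 + 1 = (1 : Fin 2) := by omega
        rw [h0]; simp; omega
      · have h0 : s.2 + 1 = (0 : Fin 2) := by omega
        rw [h0]; simp; omega

lemma flp_flp : ∀ j (s : Idx j), flp j (flp j s) = s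
  | 0, s => by rcases Idx.zero_cases s with rfl | rfl <;> exact (by decide : ∀ t : Fin 2, t + 1 + 1 = t) _
  | (j + 1), s => by
      simp only [flp, flp_flp j s.1]
      have h4 : s.2 + 1 + 1 = s.2 := by omega
      rw [h4]
      rfl

lemma flp_ne : ∀ j (s : Idx j), flp j s ≠ s
  | 0, s => by rcases Idx.zero_cases s with rfl | rfl <;> exact (by decide : ∀ t : Fin 2, t + 1 ≠ t) _
  | (j + 1), s => by
      simp only [flp, Ne]
      intro h
      have h2 : s.2 + 1 = s.2 := congrArg Prod.snd h
      omega

def bas : ∀ j, Module.Basis (Idx j) ℂ (TPow j)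
  | 0 => Pi.basisFun ℂ (Fin 2)
  | (j + 1) => (bas j).tensorProduct (Pi.basisFun ℂ (Fin 2))

def eig (α : ℂ) (j : ℕ) (s : Idx j) : ℂ := α ^ ((j + 1 : ℤ) - 2 * wt j s)

lemma stdRep_X (G : Subgroup (GL (Fin 2) ℂ)) (X : GL (Fin 2) ℂ)
    (hX : (X : Matrix (Fin 2) (Fin 2) ℂ) = !![0, -1; 1, 0]) (hXG : X ∈ G) (s : Fin 2) :
    stdRep G ⟨X, hXG⟩ (Pi.single s 1 : V2) = ((-1 : ℂ) ^ (s.val)) • (Pi.single (s+1) 1 : V2) := by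
  funext i
  simp only [stdRep, MonoidHom.coe_mk, OneHom.coe_mk, Matrix.toLin'_apply, hX]
  fin_cases s <;> fin_cases i <;>
    simp [Matrix.mulVec, dotProduct, Fin.sum_univ_two, Pi.single_apply]

lemma stdRep_A (G : Subgroup (GL (Fin 2) ℂ)) (A : GL (Fin 2) ℂ) {α : ℂ}
    (hA : (A : Matrix (Fin 2) (Fin 2) ℂ) = !![α, 0; 0, α⁻¹]) (hAG : A ∈ G) (s : Fin 2) :
    stdRep G ⟨A, hAG⟩ (Pi.single s 1 : V2)
      = (if s = 0 then α else α⁻¹) • (Pi.single s 1 : V2) := by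
  funext i
  simp only [stdRep, MonoidHom.coe_mk, OneHom.coe_mk, Matrix.toLin'_apply, hA]
  fin_cases s <;> fin_cases i <;>
    simp [Matrix.mulVec, dotProduct, Fin.sum_univ_two, Pi.single_apply]

lemma bas_zero (s : Idx 0) : bas 0 s = (Pi.single (show Fin 2 from s) 1 : V2) := by
  show (Pi.basisFun ℂ (Fin 2)) s = _
  exact Pi.basisFun_apply ℂ (Fin 2) s

lemma bas_succ (j : ℕ) (s : Idx (j+1)) :
    bas (j+1) s = (bas j s.1 ⊗ₜ[ℂ] (Pi.single s.2 1 : V2) : TPow j ⊗[ℂ] V2) := by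
  show (bas j).tensorProduct (Pi.basisFun ℂ (Fin 2)) s = _
  refine (Module.Basis.tensorProduct_apply' (bas j) (Pi.basisFun ℂ (Fin 2)) s).trans ?_
  simp [Pi.basisFun_apply]

lemma rep_X_bas (G : Subgroup (GL (Fin 2) ℂ)) (X : GL (Fin 2) ℂ)
    (hX : (X : Matrix (Fin 2) (Fin 2) ℂ) = !![0, -1; 1, 0]) (hXG : X ∈ G) :
    ∀ j (s : Idx j), TPowRep G j ⟨X, hXG⟩ (bas j s)
      = ((-1 : ℂ) ^ (wt j s)) • bas j (flp j s)
  | 0, s => by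
      rw [bas_zero, bas_zero]
      show stdRep G ⟨X, hXG⟩ _ = _
      rw [stdRep_X G X hX hXG]
      rfl
  | (j + 1), s => by
      rw [bas_succ, bas_succ]
      show TensorProduct.map (TPowRep G j ⟨X, hXG⟩) (stdRep G ⟨X, hXG⟩) _ = _
      rw [TensorProduct.map_tmul, rep_X_bas G X hX hXG j s.1, stdRep_X G X hX hXG]
      show _ = ((-1:ℂ) ^ (wt j s.1 + s.2.val)) • (bas j (flp j s.1) ⊗ₜ[ℂ] (Pi.single (s.2+1) 1 : V2))
      rw [TensorProduct.smul_tmul_smul, pow_add]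

lemma rep_A_bas (G : Subgroup (GL (Fin 2) ℂ)) (A : GL (Fin 2) ℂ) {α : ℂ} (hα : α ≠ 0)
    (hA : (A : Matrix (Fin 2) (Fin 2) ℂ) = !![α, 0; 0, α⁻¹]) (hAG : A ∈ G) :
    ∀ j (s : Idx j), TPowRep G j ⟨A, hAG⟩ (bas j s) = eig α j s • bas j s
  | 0, s => by
      rw [bas_zero]
      show stdRep G ⟨A, hAG⟩ _ = _
      rw [stdRep_A G A hA hAG]
      rcases Idx.zero_cases s with rfl | rfl
      · simp [eig, wt]; rfl
      · simp [eig, wt, _root_.zpow_neg, zpow_one]; rfl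
      
  | (j + 1), s => by
      rw [bas_succ]
      show TensorProduct.map (TPowRep G j ⟨A, hAG⟩) (stdRep G ⟨A, hAG⟩) _ = _
      rw [TensorProduct.map_tmul, rep_A_bas G A hα hA hAG j s.1, stdRep_A G A hA hAG]
      rw [TensorProduct.smul_tmul_smul]
      congr 1
      simp only [eig, wt]
      rcases (by omega : s.2.val = 0 ∨ s.2.val = 1) with h | h
      · have h0 : s.2 = 0 := by omega
        rw [if_pos h0, h]
        have he : ((j + 1 : ℕ) : ℤ) + 1 - 2 * ((wt j s.1 + 0 : ℕ) : ℤ) = ((j:ℤ) + 1 - 2 * wt j s.1) + 1 := by push_cast; ring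
        rw [he, zpow_add₀ hα, zpow_one]
      · have h0 : s.2 ≠ 0 := by intro hh; rw [hh] at h; simp at h
        rw [if_neg h0, h]
        have he : ((j + 1 : ℕ) : ℤ) + 1 - 2 * ((wt j s.1 + 1 : ℕ) : ℤ) = ((j:ℤ) + 1 - 2 * wt j s.1) + (-1) := by push_cast; ring
        rw [he, zpow_add₀ hα, _root_.zpow_neg, zpow_one]
      

lemma card_wt_eq : ∀ j (k : ℕ),
    (Finset.univ.filter (fun s : Idx j => wt j s = k)).card = (j + 1).choose k
  | 0, k => by
      rcases k with _ | _ | k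
      · decide
      · decide
      · have h0 : (0 + 1).choose (k + 1 + 1) = 0 := Nat.choose_eq_zero_of_lt (by omega)
        rw [h0, Finset.card_eq_zero, Finset.filter_eq_empty_iff]
        intro s _
        have : wt 0 s ≤ 1 := wt_le 0 s
        omega
  | (j + 1), k => by
      have key : (Finset.univ.filter (fun s : Idx (j+1) => wt (j+1) s = k)).card
          = (Finset.univ.filter (fun s : Idx j => wt j s + 0 = k)).card
            + (Finset.univ.filter (fun s : Idx j => wt j s + 1 = k)).card := by
        rw [Finset.card_filter, Finset.card_filter, Finset.card_filter]
        have hre : (∑ i : Idx (j+1), if wt (j+1) i = k then 1 else 0)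
            = ∑ p : Idx j × Fin 2,
                ((fun p : Idx j × Fin 2 => if wt j p.1 + p.2.val = k then 1 else 0) p) := rfl
        rw [hre, Fintype.sum_prod_type]
        rw [← Finset.sum_add_distrib]
        refine Finset.sum_congr rfl (fun s _ => ?_)
        rw [Fin.sum_univ_two]
        rfl
      rw [key]
      simp only [add_zero]
      rcases k with _ | k
      · rw [card_wt_eq j 0]
        have : (Finset.univ.filter (fun s : Idx j => wt j s + 1 = 0)).card = 0 := by
          rw [Finset.card_eq_zero, Finset.filter_eq_empty_iff]
          intro s _
          omega
        rw [this]
        simp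
      · rw [card_wt_eq j (k+1)]
        have : (Finset.univ.filter (fun s : Idx j => wt j s + 1 = k + 1)).card
            = (Finset.univ.filter (fun s : Idx j => wt j s = k)).card := by
          congr 1
          ext s
          simp [Nat.succ_inj]
        rw [this, card_wt_eq j k]
        rw [Nat.choose_succ_succ (j+1) k, add_comm]

lemma exists_unique_wt_zero (j : ℕ) :
    (Finset.univ.filter (fun s : Idx j => wt j s = 0)).card = 1 := by
  rw [card_wt_eq j 0, Nat.choose_zero_right]

lemma exists_unique_wt_top (j : ℕ) :
    (Finset.univ.filter (fun s : Idx j => wt j s = j + 1)).card = 1 := by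
  rw [card_wt_eq j (j+1), Nat.choose_self]

lemma sum_choose_sq (m : ℕ) :
    ∑ k ∈ Finset.range (m + 1), m.choose k * m.choose k = (m + m).choose m := by
  rw [Nat.add_choose_eq]
  rw [Finset.Nat.sum_antidiagonal_eq_sum_range_succ_mk]
  refine Finset.sum_congr rfl (fun k hk => ?_)
  have hk' : k ≤ m := by
    have := Finset.mem_range.1 hk; omega
  rw [Nat.choose_symm hk']

lemma card_pairs_wt_eq (j : ℕ) :
    (Finset.univ.filter (fun p : Idx j × Idx j => wt j p.1 = wt j p.2)).card
      = ((j + 1) + (j + 1)).choose (j + 1) := by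
  classical
  rw [← sum_choose_sq (j+1)]
  rw [Finset.card_filter, Fintype.sum_prod_type]
  have step1 : ∀ s : Idx j, (∑ t : Idx j, if wt j s = wt j t then 1 else 0)
      = (j+1).choose (wt j s) := by
    intro s
    rw [← Finset.card_filter]
    have : (Finset.univ.filter (fun t : Idx j => wt j s = wt j t))
        = (Finset.univ.filter (fun t : Idx j => wt j t = wt j s)) := by
      ext t; simp [eq_comm]
    rw [this, card_wt_eq]
  simp only [step1]
  -- group s by weight
  rw [← Finset.sum_fiberwise_of_maps_to (g := fun s : Idx j => wt j s)
      (t := Finset.range (j + 2)) (fun s _ => Finset.mem_range.2 (Nat.lt_succ_of_le (wt_le j s)))]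
  have : ∀ k ∈ Finset.range (j + 2),
      (∑ s ∈ Finset.univ.filter (fun s : Idx j => wt j s = k), (j+1).choose (wt j s))
        = (j+1).choose k * (j+1).choose k := by
    intro k _
    rw [Finset.sum_congr rfl (fun s hs => by
      rw [(Finset.mem_filter.1 hs).2]), Finset.sum_const, card_wt_eq, smul_eq_mul]
  exact Finset.sum_congr rfl this

def wcond (j : ℕ) (p : Idx j × Idx j) : Prop :=
  wt j p.1 = wt j p.2 ∨ (wt j p.1 = 0 ∧ wt j p.2 = j + 1) ∨ (wt j p.1 = j + 1 ∧ wt j p.2 = 0)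

instance (j : ℕ) : DecidablePred (wcond j) := fun p => by unfold wcond; infer_instance

def Qset (j : ℕ) : Finset (Idx j × Idx j) := Finset.univ.filter (wcond j)

lemma card_filter_pair (j : ℕ) (P Q : Idx j → Prop) [DecidablePred P] [DecidablePred Q] :
    (Finset.univ.filter (fun p : Idx j × Idx j => P p.1 ∧ Q p.2)).card
      = (Finset.univ.filter P).card * (Finset.univ.filter Q).card := by
  rw [Finset.card_filter, Finset.card_filter, Finset.card_filter, Fintype.sum_prod_type,
    Finset.sum_mul_sum]
  refine Finset.sum_congr rfl fun s _ => Finset.sum_congr rfl fun t _ => ?_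
  by_cases h1 : P s <;> by_cases h2 : Q t <;> simp [h1, h2]

lemma card_Qset (j : ℕ) :
    (Qset j).card = ((j + 1) + (j + 1)).choose (j + 1) + 2 := by
  classical
  have hsplit : Qset j
      = (Finset.univ.filter (fun p : Idx j × Idx j => wt j p.1 = wt j p.2))
        ∪ ((Finset.univ.filter (fun p : Idx j × Idx j => wt j p.1 = 0 ∧ wt j p.2 = j + 1))
        ∪ (Finset.univ.filter (fun p : Idx j × Idx j => wt j p.1 = j + 1 ∧ wt j p.2 = 0))) := by
    rw [← Finset.filter_or, ← Finset.filter_or]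
    rfl
  have hd1 : Disjoint
      (Finset.univ.filter (fun p : Idx j × Idx j => wt j p.1 = 0 ∧ wt j p.2 = j + 1))
      (Finset.univ.filter (fun p : Idx j × Idx j => wt j p.1 = j + 1 ∧ wt j p.2 = 0)) := by
    rw [Finset.disjoint_filter]
    rintro p _ ⟨h1, h2⟩ ⟨h3, h4⟩
    omega
  have hd2 : Disjoint
      (Finset.univ.filter (fun p : Idx j × Idx j => wt j p.1 = wt j p.2))
      ((Finset.univ.filter (fun p : Idx j × Idx j => wt j p.1 = 0 ∧ wt j p.2 = j + 1))
        ∪ (Finset.univ.filter (fun p : Idx j × Idx j => wt j p.1 = j + 1 ∧ wt j p.2 = 0))) := by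
    rw [Finset.disjoint_union_right, Finset.disjoint_filter, Finset.disjoint_filter]
    constructor
    · rintro p _ h1 ⟨h2, h3⟩; omega
    · rintro p _ h1 ⟨h2, h3⟩; omega
  rw [hsplit, Finset.card_union_of_disjoint hd2, Finset.card_union_of_disjoint hd1]
  rw [card_pairs_wt_eq j,
    card_filter_pair j (fun s => wt j s = 0) (fun t => wt j t = j + 1),
    card_filter_pair j (fun s => wt j s = j + 1) (fun t => wt j t = 0),
    exists_unique_wt_zero, exists_unique_wt_top]

lemma eig_eq_iff (j : ℕ) (s t : Idx j) :
    eig (Complex.exp (Real.pi * Complex.I / ((j + 1 : ℕ) : ℂ))) j s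
      = eig (Complex.exp (Real.pi * Complex.I / ((j + 1 : ℕ) : ℂ))) j t
      ↔ wcond j (s, t) := by
  have hπ : (Real.pi : ℂ) * Complex.I ≠ 0 :=
    mul_ne_zero (by exact_mod_cast Real.pi_ne_zero) Complex.I_ne_zero
  have hj : ((j + 1 : ℕ) : ℂ) ≠ 0 := by exact_mod_cast Nat.succ_ne_zero j
  set z : ℂ := Real.pi * Complex.I / ((j + 1 : ℕ) : ℂ) with hz
  have hz2 : ((j + 1 : ℕ) : ℂ) * z = (Real.pi : ℂ) * Complex.I := by
    rw [hz]; push_cast at hj ⊢; rw [mul_div_assoc']; exact mul_div_cancel_left₀ _ hj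
  have hexp : ∀ k : ℤ, (Complex.exp z) ^ k = Complex.exp (k * z) :=
    fun k => (Complex.exp_int_mul z k).symm
  set a : ℤ := (j + 1 : ℤ) - 2 * wt j s with ha
  set b : ℤ := (j + 1 : ℤ) - 2 * wt j t with hb
  have key : ∀ l : ℤ, ((a : ℂ) * z = b * z + l * (2 * Real.pi * Complex.I))
      ↔ ((wt j t : ℤ) - wt j s = (j + 1) * l) := by
    intro l
    constructor
    · intro h
      have h2 : ((j + 1 : ℕ) : ℂ) * ((a : ℂ) * z)
          = ((j + 1 : ℕ) : ℂ) * ((b : ℂ) * z + l * (2 * Real.pi * Complex.I)) := by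
        rw [h]
      have h3 : ((a : ℂ) - b - 2 * ((j : ℂ) + 1) * l) * ((Real.pi : ℂ) * Complex.I) = 0 := by
        push_cast at h2 hz2 ⊢
        linear_combination h2 - ((a : ℂ) - b) * hz2
      rcases mul_eq_zero.1 h3 with h4 | h4
      · have h5 : ((a - b : ℤ) : ℂ) = ((2 * ((j : ℤ) + 1) * l : ℤ) : ℂ) := by
          push_cast
          linear_combination h4
        have h6 : a - b = 2 * ((j : ℤ) + 1) * l := by exact_mod_cast h5
        rw [ha, hb] at h6
        linarith [h6]
      · exact absurd h4 hπ
    · intro h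
      have h6 : a - b = 2 * ((j : ℤ) + 1) * l := by rw [ha, hb]; linarith [h]
      have h5 : ((a - b : ℤ) : ℂ) = ((2 * ((j : ℤ) + 1) * l : ℤ) : ℂ) := by exact_mod_cast congrArg (fun x : ℤ => (x : ℂ)) h6
      have h4 : (a : ℂ) - b = 2 * ((j : ℂ) + 1) * l := by push_cast at h5; linear_combination h5
      apply mul_left_cancel₀ hj
      push_cast at hz2 h4 ⊢
      linear_combination ((a : ℂ) - b) * hz2 + ((Real.pi : ℂ) * Complex.I) * h4
  have hws := wt_le j s
  have hwt := wt_le j t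
  rw [eig, eig, hexp, hexp, Complex.exp_eq_exp_iff_exists_int]
  simp only [wcond]
  constructor
  · rintro ⟨l, hl⟩
    have hd := (key l).1 hl
    have hl1 : -1 ≤ l := by nlinarith [hd]
    have hl2 : l ≤ 1 := by nlinarith [hd]
    interval_cases l
    · right; right
      constructor <;> omega
    · left; omega
    · right; left
      constructor <;> omega
  · intro hw
    rcases hw with h | ⟨h1, h2⟩ | ⟨h1, h2⟩
    · exact ⟨0, (key 0).2 (by omega)⟩
    · exact ⟨1, (key 1).2 (by omega)⟩
    · exact ⟨-1, (key (-1)).2 (by omega)⟩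

def curryLE (ι : Type*) : ((ι × ι) → ℂ) ≃ₗ[ℂ] Matrix ι ι ℂ where
  toFun v := Matrix.of fun s t => v (s, t)
  invFun M := fun p => M p.1 p.2
  map_add' _ _ := rfl
  map_smul' _ _ := rfl
  left_inv _ := rfl
  right_inv _ := rfl

lemma toMatrix_rep_A (G : Subgroup (GL (Fin 2) ℂ)) (A : GL (Fin 2) ℂ) {α : ℂ} (hα : α ≠ 0)
    (hA : (A : Matrix (Fin 2) (Fin 2) ℂ) = !![α, 0; 0, α⁻¹]) (hAG : A ∈ G) (j : ℕ) :
    LinearMap.toMatrix (bas j) (bas j) ((TPowRep G j) ⟨A, hAG⟩) = Matrix.diagonal (eig α j) := by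
  ext s t
  rw [LinearMap.toMatrix_apply, rep_A_bas G A hα hA hAG j t, _root_.map_smul, Module.Basis.repr_self]
  rw [Finsupp.smul_single, smul_eq_mul, mul_one, Finsupp.single_apply, Matrix.diagonal_apply]
  by_cases h : t = s
  · subst h; simp
  · rw [if_neg h, if_neg (Ne.symm h)]

lemma toMatrix_rep_X (G : Subgroup (GL (Fin 2) ℂ)) (X : GL (Fin 2) ℂ)
    (hX : (X : Matrix (Fin 2) (Fin 2) ℂ) = !![0, -1; 1, 0]) (hXG : X ∈ G) (j : ℕ) :
    LinearMap.toMatrix (bas j) (bas j) ((TPowRep G j) ⟨X, hXG⟩)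
      = Matrix.of (fun s t => if s = flp j t then ((-1 : ℂ)) ^ (wt j t) else 0) := by
  ext s t
  rw [LinearMap.toMatrix_apply, rep_X_bas G X hX hXG j t, _root_.map_smul, Module.Basis.repr_self]
  rw [Finsupp.smul_single, smul_eq_mul, mul_one, Finsupp.single_apply, Matrix.of_apply]
  by_cases h : s = flp j t
  · rw [if_pos h, if_pos h.symm]
  · rw [if_neg h, if_neg (fun hh => h hh.symm)]

lemma mem_equivEnd_iff {G : Subgroup (GL (Fin 2) ℂ)} {X A : GL (Fin 2) ℂ}
    (hG : G = Subgroup.closure {X, A}) (hXG : X ∈ G) (hAG : A ∈ G) (j : ℕ)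
    (f : TPow j →ₗ[ℂ] TPow j) :
    f ∈ equivEnd (TPowRep G j)
      ↔ (f ∘ₗ (TPowRep G j) ⟨X, hXG⟩ = (TPowRep G j) ⟨X, hXG⟩ ∘ₗ f)
        ∧ (f ∘ₗ (TPowRep G j) ⟨A, hAG⟩ = (TPowRep G j) ⟨A, hAG⟩ ∘ₗ f) := by
  constructor
  · intro hf
    exact ⟨hf _, hf _⟩
  · rintro ⟨h1, h2⟩ g
    obtain ⟨u, hu⟩ := g
    have hu' : u ∈ Subgroup.closure ({X, A} : Set (GL (Fin 2) ℂ)) := by rw [← hG]; exact hu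
    revert hu
    refine Subgroup.closure_induction
      (p := fun u _ => ∀ hu3 : u ∈ G, f ∘ₗ (TPowRep G j) ⟨u, hu3⟩ = (TPowRep G j) ⟨u, hu3⟩ ∘ₗ f)
      ?_ ?_ ?_ ?_ hu'
    · rintro x (rfl | rfl)
      · intro _; exact h1
      · intro _; exact h2
    · intro hu3
      have h3 : (⟨1, hu3⟩ : G) = 1 := rfl
      rw [h3, _root_.map_one]
      ext v
      simp
    · intro x y hx hy px py hu3
      have hx' : x ∈ G := by rw [hG]; exact hx
      have hy' : y ∈ G := by rw [hG]; exact hy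
      have h3 : (TPowRep G j) ⟨x * y, hu3⟩
          = (TPowRep G j) ⟨x, hx'⟩ ∘ₗ (TPowRep G j) ⟨y, hy'⟩ := by
        rw [← Module.End.mul_eq_comp, ← _root_.map_mul]
        rfl
      rw [h3, ← LinearMap.comp_assoc, px hx', LinearMap.comp_assoc, py hy',
        ← LinearMap.comp_assoc]
    · intro x hx px hu3
      have hx' : x ∈ G := by rw [hG]; exact hx
      set a := (TPowRep G j) ⟨x, hx'⟩ with hadef
      set b := (TPowRep G j) ⟨x⁻¹, hu3⟩ with hbdef
      have hab : a ∘ₗ b = LinearMap.id := by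
        rw [← Module.End.mul_eq_comp, hadef, hbdef, ← _root_.map_mul]
        have : (⟨x, hx'⟩ * ⟨x⁻¹, hu3⟩ : G) = 1 := Subtype.ext (mul_inv_cancel x)
        rw [this, _root_.map_one]
        rfl
      have hba : b ∘ₗ a = LinearMap.id := by
        rw [← Module.End.mul_eq_comp, hadef, hbdef, ← _root_.map_mul]
        have : (⟨x⁻¹, hu3⟩ * ⟨x, hx'⟩ : G) = 1 := Subtype.ext (inv_mul_cancel x)
        rw [this, _root_.map_one]
        rfl
      have hfa := px hx'
      calc f ∘ₗ b = (b ∘ₗ a) ∘ₗ (f ∘ₗ b) := by rw [hba]; ext v; simp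
        _ = b ∘ₗ (a ∘ₗ f) ∘ₗ b := by rw [LinearMap.comp_assoc, LinearMap.comp_assoc]
        _ = b ∘ₗ (f ∘ₗ a) ∘ₗ b := by rw [← hfa]
        _ = (b ∘ₗ f) ∘ₗ (a ∘ₗ b) := by rw [LinearMap.comp_assoc, LinearMap.comp_assoc]
        _ = b ∘ₗ f := by rw [hab]; ext v; simp


/-- The solution space of the symmetry constraints. -/
def constrSub {κ : Type*} [Fintype κ] (σ : κ → κ) (c : κ → ℂ) (Q : Finset κ) :
    Submodule ℂ (κ → ℂ) where
  carrier := {v | (∀ p ∉ Q, v p = 0) ∧ ∀ p, v (σ p) = c p * v p}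
  add_mem' := by
    rintro u v ⟨hu1, hu2⟩ ⟨hv1, hv2⟩
    refine ⟨fun p hp => ?_, fun p => ?_⟩
    · simp [Pi.add_apply, hu1 p hp, hv1 p hp]
    · simp [Pi.add_apply, hu2 p, hv2 p]; ring
  zero_mem' := ⟨fun p _ => rfl, fun p => by simp⟩
  smul_mem' := by
    rintro a v ⟨hv1, hv2⟩
    refine ⟨fun p hp => ?_, fun p => ?_⟩
    · simp [hv1 p hp]
    · simp [hv2 p]; ring

theorem finrank_constrSub {κ : Type*} [Fintype κ] [DecidableEq κ]
    (σ : κ → κ) (hσ : ∀ p, σ (σ p) = p) (hfix : ∀ p, σ p ≠ p)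
    (c : κ → ℂ) (hc : ∀ p, c (σ p) * c p = 1)
    (Q : Finset κ) (hQ : ∀ p ∈ Q, σ p ∈ Q) :
    2 * Module.finrank ℂ (constrSub σ c Q) = Q.card := by
  classical
  -- an injective encoding
  let e := (Fintype.equivFin κ)
  have he : Function.Injective e := e.injective
  set R : Finset κ := Q.filter (fun p => e p < e (σ p)) with hR
  have hcne : ∀ p, c p ≠ 0 := by
    intro p h
    have := hc p
    rw [h, mul_zero] at this
    exact one_ne_zero this.symm
  have hne : ∀ p, e p ≠ e (σ p) := fun p h => hfix p (he h.symm)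
  -- trichotomy
  have htri : ∀ p ∈ Q, (p ∈ R ∧ σ p ∉ R) ∨ (p ∉ R ∧ σ p ∈ R) := by
    intro p hp
    rcases lt_or_gt_of_ne (hne p) with h | h
    · left
      constructor
      · exact Finset.mem_filter.2 ⟨hp, h⟩
      · intro hmem
        have := (Finset.mem_filter.1 hmem).2
        rw [hσ p] at this
        omega
    · right
      constructor
      · intro hmem
        have := (Finset.mem_filter.1 hmem).2
        omega
      · refine Finset.mem_filter.2 ⟨hQ p hp, ?_⟩
        rw [hσ p]
        omega
  have hRQ : ∀ p, p ∈ R → p ∈ Q := fun p hp => (Finset.mem_filter.1 hp).1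
  -- the restriction linear map
  let φ : constrSub σ c Q →ₗ[ℂ] ({ x // x ∈ R } → ℂ) :=
    { toFun := fun v r => (v : κ → ℂ) r
      map_add' := fun u v => rfl
      map_smul' := fun a v => rfl }
  have hinj : Function.Injective φ := by
    rw [injective_iff_map_eq_zero]
    intro v hv
    ext p
    show (v : κ → ℂ) p = 0
    by_cases hp : p ∈ Q
    · rcases htri p hp with ⟨h1, _⟩ | ⟨_, h2⟩
      · exact congrFun hv ⟨p, h1⟩
      · have h3 : (v : κ → ℂ) (σ p) = 0 := congrFun hv ⟨σ p, h2⟩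
        have h4 := v.2.2 p
        rw [h3] at h4
        exact (mul_eq_zero.1 h4.symm).resolve_left (hcne p)
    · exact v.2.1 p hp
  have hsurj : Function.Surjective φ := by
    intro u
    set u' : κ → ℂ := fun p => if h : p ∈ R then u ⟨p, h⟩ else 0 with hu'
    refine ⟨⟨fun p => if p ∈ R then u' p else
      if σ p ∈ R then c (σ p) * u' (σ p) else 0, ?_, ?_⟩, ?_⟩
    · intro p hp
      have h1 : p ∉ R := fun h => hp (hRQ p h)
      have h2 : σ p ∉ R := by
        intro h
        exact hp (by rw [← hσ p]; exact hQ _ (hRQ _ h))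
      simp [h1, h2]
    · intro p
      by_cases h1 : p ∈ R
      · have h2 : σ p ∉ R := (htri p (hRQ p h1)).elim (fun h => h.2) (fun h => absurd h1 h.1)
        have h3 : σ (σ p) ∈ R := by rw [hσ p]; exact h1
        simp only [if_neg h2, if_pos h3, if_pos h1, hσ p]
      · by_cases h2 : σ p ∈ R
        · have h4 : c p * c (σ p) = 1 := by have := hc (σ p); rwa [hσ p] at this
          simp only [if_pos h2, if_neg h1]
          rw [← mul_assoc, h4, one_mul]
        · have hp : p ∉ Q := by
            intro hp
            rcases htri p hp with ⟨h, _⟩ | ⟨_, h⟩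
            exacts [h1 h, h2 h]
          have hp2 : σ p ∉ Q := fun h => hp (by rw [← hσ p]; exact hQ _ h)
          have h3 : σ (σ p) ∉ R := by rw [hσ p]; exact h1
          simp [h1, h2, h3]
    · ext r
      show (if (r : κ) ∈ R then u' (r : κ) else _) = u r
      rw [if_pos r.2, hu']
      simp only [dif_pos r.2]
  have hrank : Module.finrank ℂ (constrSub σ c Q) = R.card := by
    have := LinearEquiv.finrank_eq (LinearEquiv.ofBijective φ ⟨hinj, hsurj⟩)
    rw [this, Module.finrank_fintype_fun_eq_card, Fintype.card_coe]
  rw [hrank]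
  -- card Q = 2 * card R
  have himg : Q = R ∪ R.image σ := by
    ext p
    constructor
    · intro hp
      rcases htri p hp with ⟨h, _⟩ | ⟨_, h⟩
      · exact Finset.mem_union_left _ h
      · refine Finset.mem_union_right _ (Finset.mem_image.2 ⟨σ p, h, hσ p⟩)
    · intro hp
      rcases Finset.mem_union.1 hp with h | h
      · exact hRQ p h
      · obtain ⟨q, hq, rfl⟩ := Finset.mem_image.1 h
        exact hQ q (hRQ q hq)
  have hdisj : Disjoint R (R.image σ) := by
    rw [Finset.disjoint_left]
    intro p hp hp2
    obtain ⟨q, hq, rfl⟩ := Finset.mem_image.1 hp2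
    rcases htri q (hRQ q hq) with ⟨_, h⟩ | ⟨h, _⟩
    exacts [h hp, h hq]
  have hcard : (R.image σ).card = R.card :=
    Finset.card_image_of_injective _ (Function.Involutive.injective hσ)
  rw [himg, Finset.card_union_of_disjoint hdisj, hcard]
  ring

lemma mem_map_equiv'' {M N : Type*} [AddCommGroup M] [AddCommGroup N] [Module ℂ M] [Module ℂ N]
    (e : M ≃ₗ[ℂ] N) (p : Submodule ℂ M) (x : N) :
    x ∈ Submodule.map (e : M →ₗ[ℂ] N) p ↔ e.symm x ∈ p := by
  rw [Submodule.mem_map]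
  constructor
  · rintro ⟨y, hy, rfl⟩
    rwa [LinearEquiv.coe_coe, LinearEquiv.symm_apply_apply]
  · intro h
    exact ⟨e.symm x, h, e.apply_symm_apply x⟩

/-- For every integer `n ≥ 1`, the endomorphism algebra of the `n`-th tensor power of the
standard representation of the dicyclic group of degree `n` satisfies
`dim_ℂ End_{Dic_n}(V^{⊗n}) = (1/2)·binomial(2n,n) + 1`. -/
theorem dim_equivEnd_tensorPower_dicyclic_eq
    (n : ℕ) (hn : 1 ≤ n) (X A : GL (Fin 2) ℂ)
    (hX : (X : Matrix (Fin 2) (Fin 2) ℂ) = !![0, -1; 1, 0])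
    (hA : (A : Matrix (Fin 2) (Fin 2) ℂ) =
      !![Complex.exp (Real.pi * Complex.I / n), 0;
         0, Complex.exp (-(Real.pi * Complex.I / n))])
    (G : Subgroup (GL (Fin 2) ℂ)) (hG : G = Subgroup.closure {X, A}) :
    (Module.finrank ℂ (equivEnd (TPowRep G (n - 1))) : ℚ) =
      (Nat.choose (2 * n) n : ℚ) / 2 + 1 := by
  classical
  obtain ⟨j, rfl⟩ : ∃ j, n = j + 1 := ⟨n - 1, (Nat.succ_pred_eq_of_pos hn).symm⟩
  have hj1 : j + 1 - 1 = j := rfl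
  rw [hj1]
  set α : ℂ := Complex.exp (Real.pi * Complex.I / ((j + 1 : ℕ) : ℂ)) with hαdef
  have hα : α ≠ 0 := Complex.exp_ne_zero _
  have hA' : (A : Matrix (Fin 2) (Fin 2) ℂ) = !![α, 0; 0, α⁻¹] := by
    rw [hA, Complex.exp_neg]
  have hXG : X ∈ G := hG ▸ Subgroup.subset_closure (by simp)
  have hAG : A ∈ G := hG ▸ Subgroup.subset_closure (by simp)
  -- notation
  set κ := (Idx j × Idx j)
  set σf : κ → κ := fun p => (flp j p.1, flp j p.2) with hσf
  set cf : κ → ℂ := fun p => (-1 : ℂ) ^ (wt j (flp j p.1) + wt j (flp j p.2)) with hcf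
  have hsq : ∀ k : ℕ, ((-1 : ℂ)) ^ k * ((-1 : ℂ)) ^ k = 1 := by
    intro k
    rw [← pow_add]
    exact Even.neg_one_pow ⟨k, rfl⟩
  have hwkey : ∀ s : Idx j, ((-1 : ℂ)) ^ (wt j s) * (-1) ^ (wt j (flp j s)) = (-1) ^ (j + 1) := by
    intro s
    rw [← pow_add]
    congr 1
    have := wt_le j s
    rw [wt_flp]
    omega
  -- the three submodules are isomorphic
  have hfr1 : Module.finrank ℂ (equivEnd (TPowRep G j))
      = Module.finrank ℂ ((equivEnd (TPowRep G j)).map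
          (LinearMap.toMatrix (bas j) (bas j)).toLinearMap) :=
    (LinearEquiv.finrank_map_eq _ _).symm
  have hQne : ∀ p : κ, p ∉ Qset j ↔ ¬ wcond j p := by
    intro p
    simp [Qset]
  have hσσ : ∀ p : κ, σf (σf p) = p := by
    intro p
    have h0 : σf (σf p) = (flp j (flp j p.1), flp j (flp j p.2)) := rfl
    rw [h0, flp_flp, flp_flp]
  have hfix : ∀ p : κ, σf p ≠ p := by
    intro p h
    exact flp_ne j p.1 (congrArg Prod.fst h)
  have hcc : ∀ p : κ, cf (σf p) * cf p = 1 := by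
    intro p
    have h1 : cf (σf p) = (-1 : ℂ) ^ (wt j p.1 + wt j p.2) := by
      show (-1 : ℂ) ^ (wt j (flp j (flp j p.1)) + wt j (flp j (flp j p.2))) = _
      rw [flp_flp, flp_flp]
    rw [h1]
    show _ * (-1 : ℂ) ^ (wt j (flp j p.1) + wt j (flp j p.2)) = 1
    rw [pow_add, pow_add]
    linear_combination ((-1 : ℂ) ^ (wt j p.2) * (-1 : ℂ) ^ (wt j (flp j p.2))) * hwkey p.1
      + (-1 : ℂ) ^ (j + 1) * hwkey p.2 + hsq (j + 1)
  have hQc : ∀ p ∈ Qset j, σf p ∈ Qset j := by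
    intro p hp
    have h1 := wt_le j p.1
    have h2 := wt_le j p.2
    simp only [Qset, Finset.mem_filter, Finset.mem_univ, true_and] at hp ⊢
    have hw1 : wt j (σf p).1 = (j + 1) - wt j p.1 := wt_flp j p.1
    have hw2 : wt j (σf p).2 = (j + 1) - wt j p.2 := wt_flp j p.2
    unfold wcond at hp ⊢
    rw [hw1, hw2]
    omega
  have hmap : (equivEnd (TPowRep G j)).map (LinearMap.toMatrix (bas j) (bas j)).toLinearMap
      = (constrSub σf cf (Qset j)).map (curryLE (Idx j)).toLinearMap := by
    ext M
    rw [mem_map_equiv'', mem_map_equiv'']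
    rw [mem_equivEnd_iff hG hXG hAG j]
    have hTf : LinearMap.toMatrix (bas j) (bas j)
        ((LinearMap.toMatrix (bas j) (bas j)).symm M) = M :=
      (LinearMap.toMatrix (bas j) (bas j)).apply_symm_apply M
    have hcond : ∀ s x : Idx j, (s = flp j x) = (flp j s = x) :=
      fun s x => propext ⟨fun h => by rw [h, flp_flp], fun h => by rw [← h, flp_flp]⟩
    -- commutation with X in matrix form
    have hX2 : ((LinearMap.toMatrix (bas j) (bas j)).symm M ∘ₗ (TPowRep G j) ⟨X, hXG⟩
          = (TPowRep G j) ⟨X, hXG⟩ ∘ₗ (LinearMap.toMatrix (bas j) (bas j)).symm M)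
        ↔ ∀ s t, M s (flp j t) * (-1 : ℂ) ^ (wt j t)
            = (-1 : ℂ) ^ (wt j (flp j s)) * M (flp j s) t := by
      rw [← Function.Injective.eq_iff (LinearMap.toMatrix (bas j) (bas j)).injective,
        LinearMap.toMatrix_comp (bas j) (bas j) (bas j),
        LinearMap.toMatrix_comp (bas j) (bas j) (bas j), hTf,
        toMatrix_rep_X G X hX hXG j, ← Matrix.ext_iff]
      constructor
      · intro h s t
        have h2 := h s t
        rw [Matrix.mul_apply, Matrix.mul_apply] at h2
        simp only [Matrix.of_apply, mul_ite, ite_mul, mul_zero, zero_mul,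
          Finset.sum_ite_eq', Finset.mem_univ, if_true] at h2
        simp only [hcond, Finset.sum_ite_eq, Finset.mem_univ, if_true] at h2
        exact h2
      · intro h s t
        rw [Matrix.mul_apply, Matrix.mul_apply]
        simp only [Matrix.of_apply, mul_ite, ite_mul, mul_zero, zero_mul,
          Finset.sum_ite_eq', Finset.mem_univ, if_true]
        simp only [hcond, Finset.sum_ite_eq, Finset.mem_univ, if_true]
        exact h s t
    -- commutation with A in matrix form
    have hA2 : ((LinearMap.toMatrix (bas j) (bas j)).symm M ∘ₗ (TPowRep G j) ⟨A, hAG⟩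
          = (TPowRep G j) ⟨A, hAG⟩ ∘ₗ (LinearMap.toMatrix (bas j) (bas j)).symm M)
        ↔ ∀ s t, M s t * eig α j t = eig α j s * M s t := by
      rw [← Function.Injective.eq_iff (LinearMap.toMatrix (bas j) (bas j)).injective,
        LinearMap.toMatrix_comp (bas j) (bas j) (bas j),
        LinearMap.toMatrix_comp (bas j) (bas j) (bas j), hTf,
        toMatrix_rep_A G A hα hA' hAG j, ← Matrix.ext_iff]
      constructor
      · intro h s t
        have h2 := h s t
        rwa [Matrix.mul_diagonal, Matrix.diagonal_mul] at h2
      · intro h s t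
        rw [Matrix.mul_diagonal, Matrix.diagonal_mul]
        exact h s t
    rw [hX2, hA2]
    have hval : ∀ p : κ, ((curryLE (Idx j)).symm M) p = M p.1 p.2 := fun p => rfl
    constructor
    · rintro ⟨hx, ha⟩
      constructor
      · intro p hp
        rw [hval]
        have hnc : ¬ wcond j p := (hQne p).1 hp
        have hne : eig α j p.1 ≠ eig α j p.2 := by
          intro h
          exact hnc ((eig_eq_iff j p.1 p.2).1 h)
        have h0 : (eig α j p.1 - eig α j p.2) * M p.1 p.2 = 0 := by
          linear_combination (-1 : ℂ) * ha p.1 p.2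
        rcases mul_eq_zero.1 h0 with h1 | h1
        · exact absurd (sub_eq_zero.1 h1) hne
        · exact h1
      · intro p
        rw [hval, hval]
        show M (flp j p.1) (flp j p.2) = cf p * M p.1 p.2
        have h2 := hx p.1 (flp j p.2)
        rw [flp_flp] at h2
        -- h2 : M p.1 p.2 * (-1)^(wt (flp p.2)) = (-1)^(wt (flp p.1)) * M (flp p.1) (flp p.2)
        show _ = (-1 : ℂ) ^ (wt j (flp j p.1) + wt j (flp j p.2)) * M p.1 p.2
        rw [pow_add]
        linear_combination (-((-1 : ℂ) ^ (wt j (flp j p.1)))) * h2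
          - M (flp j p.1) (flp j p.2) * hsq (wt j (flp j p.1))
    · rintro ⟨hsupp, hrel⟩
      constructor
      · intro s t
        have h2 := hrel (s, flp j t)
        rw [hval, hval] at h2
        have h3 : M (flp j s) t
            = (-1 : ℂ) ^ (wt j (flp j s) + wt j t) * M s (flp j t) := by
          simpa [hσf, hcf, flp_flp] using h2
        rw [pow_add] at h3
        linear_combination (-((-1 : ℂ) ^ (wt j (flp j s)))) * h3
          - M s (flp j t) * ((-1 : ℂ) ^ (wt j t)) * hsq (wt j (flp j s))
      · intro s t
        by_cases h : wcond j (s, t)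
        · have heq : eig α j s = eig α j t := (eig_eq_iff j s t).2 h
          rw [heq, mul_comm]
        · have h0 : ((curryLE (Idx j)).symm M) (s, t) = 0 :=
            hsupp (s, t) ((hQne (s, t)).2 h)
          rw [hval] at h0
          show M s t * _ = _ * M s t
          rw [h0, zero_mul, mul_zero]
  -- assemble the dimension count
  have h2fr : 2 * Module.finrank ℂ (equivEnd (TPowRep G j)) = (Qset j).card := by
    have hfr2 : Module.finrank ℂ
        (Submodule.map (curryLE (Idx j)).toLinearMap (constrSub σf cf (Qset j)))
        = Module.finrank ℂ (constrSub σf cf (Qset j)) :=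
      LinearEquiv.finrank_map_eq (curryLE (Idx j)) _
    rw [hfr1, hmap, hfr2]
    exact finrank_constrSub σf hσσ hfix cf hcc (Qset j) hQc
  rw [card_Qset j] at h2fr
  have hCeq : (j + 1) + (j + 1) = 2 * (j + 1) := by ring
  rw [hCeq] at h2fr
  have heven : 2 ∣ (2 * (j + 1)).choose (j + 1) := by
    rw [← Nat.centralBinom_eq_two_mul_choose]
    exact Nat.two_dvd_centralBinom_of_one_le (by omega)
  obtain ⟨c, hc⟩ := heven
  have hfr : Module.finrank ℂ (equivEnd (TPowRep G j)) = c + 1 := by omega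
  rw [hfr, hc]
  push_cast
  ring
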